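/- Sampling construction for the L-distribution: if ε_x ~ N(0,1) and ε_h ~ Uniform(0,1) are independent and s ∈ {−1, +1} is an independent fair sign, then x = μ + s·σ·√(−2 log ε_h + ε_x²) has density q_L(x;μ,σ) = (x−μ)²/(√(2π)σ³)·exp(−(x−μ)²/(2σ²)). -/

import Mathlib

open Real MeasureTheory ProbabilityTheory

noncomputable def qL (μ σ x : ℝ) : ℝ :=
  (x - μ)^2 / (Real.sqrt (2 * π) * σ^3) * Real.exp (-(x - μ)^2 / (2 * σ^2))

/-- Joint law of (ε_x, ε_h, s): standard Gaussian × Uniform(0,1) × fair sign. -/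
noncomputable def jointLaw : Measure (ℝ × ℝ × ℝ) :=
  (gaussianReal 0 1).prod
    ((volume.restrict (Set.Ioo (0:ℝ) 1)).prod
      ((2:ENNReal)⁻¹ • (Measure.dirac (1:ℝ) + Measure.dirac (-1:ℝ))))


noncomputable def Jfun (b : ℝ) : ℝ := ∫ r in (0:ℝ)..b, r^2 * Real.exp (-r^2/2)

lemma integrable_sq_exp {b : ℝ} (hb : 0 < b) :
    Integrable (fun x : ℝ => x^2 * Real.exp (-b*x^2)) := by
  have hint : Integrable (fun x : ℝ => (2/b) * Real.exp (-(b/2)*x^2)) :=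
    (integrable_exp_neg_mul_sq (by linarith)).const_mul _
  refine hint.mono' ?_ ?_
  · exact ((measurable_id.pow_const 2).mul
      ((measurable_id.pow_const 2).const_mul (-b)).exp).aestronglyMeasurable
  · filter_upwards with x
    set u := Real.exp (-(b/2)*x^2) with hu
    set v := Real.exp ((b/2)*x^2) with hv
    have huv : u * v = 1 := by rw [hu, hv, ← Real.exp_add]; ring_nf; exact Real.exp_zero
    have hu0 : 0 < u := Real.exp_pos _
    have hv0 : 0 < v := Real.exp_pos _
    have hx : x^2 ≤ (2/b) * v := by
      have h2 : (b/2)*x^2 ≤ v := by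
        have := Real.add_one_le_exp ((b/2)*x^2); rw [← hv] at this; nlinarith
      calc x^2 = (2/b) * ((b/2)*x^2) := by field_simp
      _ ≤ (2/b) * v := by apply mul_le_mul_of_nonneg_left h2; positivity
    have he : Real.exp (-b*x^2) = u * u := by
      rw [hu, ← Real.exp_add]; ring_nf
    rw [Real.norm_eq_abs, abs_of_nonneg (by positivity), he]
    have h2b : 0 < 2/b := by positivity
    have step1 : x^2 * (u*u) ≤ (2/b) * v * (u*u) :=
      mul_le_mul_of_nonneg_right hx (mul_pos hu0 hu0).le
    have step2 : (2/b) * v * (u*u) = (2/b) * u := by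
      calc (2/b) * v * (u*u) = (2/b) * u * (u*v) := by ring
      _ = (2/b) * u := by rw [huv]; ring
    linarith

lemma integrable_gexp : Integrable (fun x : ℝ => Real.exp (-x^2/2)) := by
  have := integrable_exp_neg_mul_sq (by norm_num : (0:ℝ) < 1/2)
  convert this using 2 with x; ring_nf

lemma integrable_sq_gexp : Integrable (fun x : ℝ => x^2 * Real.exp (-x^2/2)) := by
  have := integrable_sq_exp (by norm_num : (0:ℝ) < 1/2)
  convert this using 2 with x; ring_nf

lemma Jfun_eq (b : ℝ) :
    Jfun b = (∫ x in (0:ℝ)..b, Real.exp (-x^2/2)) - b * Real.exp (-b^2/2) := by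
  have hcont : Continuous fun x : ℝ => Real.exp (-x^2/2) := by continuity
  have hF : ∀ r ∈ Set.uIcc (0:ℝ) b, HasDerivAt (fun y : ℝ =>
      (∫ x in (0:ℝ)..y, Real.exp (-x^2/2)) - y * Real.exp (-y^2/2))
      (r^2 * Real.exp (-r^2/2)) r := by
    intro r _
    have h1 : HasDerivAt (fun y : ℝ => ∫ x in (0:ℝ)..y, Real.exp (-x^2/2))
        (Real.exp (-r^2/2)) r :=
      intervalIntegral.integral_hasDerivAt_right
        (integrable_gexp.intervalIntegrable)
        (hcont.stronglyMeasurable.stronglyMeasurableAtFilter)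
        hcont.continuousAt
    have h2 : HasDerivAt (fun y : ℝ => y * Real.exp (-y^2/2))
        (Real.exp (-r^2/2) + r * (Real.exp (-r^2/2) * (-r))) r := by
      have hexp : HasDerivAt (fun y : ℝ => Real.exp (-y^2/2))
          (Real.exp (-r^2/2) * (-r)) r := by
        have hin : HasDerivAt (fun y : ℝ => -y^2/2) (-r) r := by
          have : HasDerivAt (fun y : ℝ => y^2) (2*r) r := by
            simpa using (hasDerivAt_pow 2 r)
          convert (show HasDerivAt (fun y : ℝ => -y^2/2) (-(2*r)/2) r from this.neg.div_const 2) using 1; ring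
        exact (Real.hasDerivAt_exp _).comp r hin
      simpa using (hasDerivAt_id r).fun_mul hexp
    convert (show HasDerivAt (fun y : ℝ => (∫ x in (0:ℝ)..y, Real.exp (-x^2/2)) - y * Real.exp (-y^2/2))
        (Real.exp (-r^2/2) - (Real.exp (-r^2/2) + r * (Real.exp (-r^2/2) * (-r)))) r from h1.sub h2) using 1; ring
  have := intervalIntegral.integral_eq_sub_of_hasDerivAt hF
    (integrable_sq_gexp.intervalIntegrable)
  rw [Jfun, this]
  simp

lemma Jfun_neg (b : ℝ) : Jfun (-b) = - Jfun b := by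
  have h := intervalIntegral.integral_comp_neg (a := (0:ℝ)) (b := b)
    (fun x => x^2 * Real.exp (-x^2/2))
  simp only [neg_sq, neg_zero] at h
  rw [Jfun, Jfun, intervalIntegral.integral_symm, ← h]

lemma gauss_Ioi : ∫ x in Set.Ioi (0:ℝ), Real.exp (-x^2/2) = Real.sqrt (π/2) := by
  have := integral_gaussian_Ioi (1/2)
  have h2 : ∀ x : ℝ, -(1/2 : ℝ) * x^2 = -x^2/2 := by intro x; ring
  simp_rw [h2] at this
  rw [this]
  rw [show π / (1/2 : ℝ) = 4 * (π/2) by ring, show (4:ℝ) = 2^2 by norm_num,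
    Real.sqrt_mul (by positivity), Real.sqrt_sq (by norm_num : (0:ℝ) ≤ 2)]
  ring

lemma tendsto_mul_gexp : Filter.Tendsto (fun b : ℝ => b * Real.exp (-b^2/2))
    Filter.atTop (nhds 0) := by
  have h1 : Filter.Tendsto (fun b : ℝ => b * Real.exp (-b)) Filter.atTop (nhds 0) := by
    simpa using Real.tendsto_pow_mul_exp_neg_atTop_nhds_zero 1
  apply squeeze_zero' (g := fun b : ℝ => b * Real.exp (-b))
  · filter_upwards [Filter.eventually_ge_atTop (0:ℝ)] with b hb
    positivity
  · filter_upwards [Filter.eventually_ge_atTop (2:ℝ)] with b hb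
    have : -b^2/2 ≤ -b := by nlinarith
    have := Real.exp_le_exp.mpr this
    nlinarith [Real.exp_pos (-b^2/2)]
  · exact h1

lemma Jfun_tendsto : Filter.Tendsto Jfun Filter.atTop (nhds (Real.sqrt (π/2))) := by
  have h1 : Filter.Tendsto (fun b : ℝ => ∫ x in (0:ℝ)..b, Real.exp (-x^2/2))
      Filter.atTop (nhds (Real.sqrt (π/2))) := by
    rw [← gauss_Ioi]
    exact intervalIntegral_tendsto_integral_Ioi 0 integrable_gexp.integrableOn
      Filter.tendsto_id
  have := h1.sub tendsto_mul_gexp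
  simp only [sub_zero] at this
  apply this.congr
  intro b; rw [Jfun_eq]

lemma Jfun_nonneg {b : ℝ} (hb : 0 ≤ b) : 0 ≤ Jfun b := by
  rw [Jfun]
  apply intervalIntegral.integral_nonneg hb
  intro x _; positivity

lemma Jfun_mono : Monotone Jfun := by
  intro x y hxy
  have h := intervalIntegral.integral_add_adjacent_intervals (a := (0:ℝ)) (b := x) (c := y)
    (integrable_sq_gexp.intervalIntegrable) (integrable_sq_gexp.intervalIntegrable)
  have hpos : 0 ≤ ∫ t in x..y, t^2 * Real.exp (-t^2/2) := by
    apply intervalIntegral.integral_nonneg hxy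
    intro t _; positivity
  rw [Jfun, Jfun, ← h]
  linarith

lemma Jfun_le (b : ℝ) : Jfun b ≤ Real.sqrt (π/2) :=
  Jfun_mono.ge_of_tendsto Jfun_tendsto b

lemma sqrt_pi_half_eq : Real.sqrt (π/2) = Real.sqrt (2*π) / 2 := by
  rw [show (2:ℝ)*π = 4*(π/2) by ring, show (4:ℝ) = 2^2 by norm_num,
    Real.sqrt_mul (by positivity), Real.sqrt_sq (by norm_num : (0:ℝ) ≤ 2)]
  ring

lemma gexp_interval_even (a : ℝ) :
    (∫ x in (-a)..a, Real.exp (-x^2/2)) = 2 * ∫ x in (0:ℝ)..a, Real.exp (-x^2/2) := by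
  have h := intervalIntegral.integral_comp_neg (a := (0:ℝ)) (b := a)
    (fun x => Real.exp (-x^2/2))
  simp only [neg_sq, neg_zero] at h
  have h2 := intervalIntegral.integral_add_adjacent_intervals (a := -a) (b := (0:ℝ)) (c := a)
    (integrable_gexp.intervalIntegrable) (integrable_gexp.intervalIntegrable)
  rw [← h2, h]; ring

lemma key_identity {a : ℝ} (ha : 0 ≤ a) :
    ∫ x : ℝ, Real.exp (-x^2/2) * max (1 - Real.exp ((x^2 - a^2)/2)) 0 = 2 * Jfun a := by
  have hfun : (fun x : ℝ => Real.exp (-x^2/2) * max (1 - Real.exp ((x^2 - a^2)/2)) 0)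
      = Set.indicator (Set.Ioo (-a) a)
        (fun x => Real.exp (-x^2/2) - Real.exp (-a^2/2)) := by
    funext x
    by_cases hx : x ∈ Set.Ioo (-a) a
    · rw [Set.indicator_of_mem hx]
      obtain ⟨h1, h2⟩ := hx
      have hlt : x^2 < a^2 := sq_lt_sq' h1 h2
      have hexp : Real.exp ((x^2 - a^2)/2) < 1 := by
        rw [Real.exp_lt_one_iff]; linarith
      rw [max_eq_left (by linarith)]
      rw [mul_sub, mul_one, ← Real.exp_add]
      ring_nf
    · rw [Set.indicator_of_notMem hx]
      have hge : a^2 ≤ x^2 := by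
        rcases not_and_or.mp hx with h | h
        · push_neg at h
          nlinarith
        · push_neg at h
          nlinarith
      have hexp : (1:ℝ) ≤ Real.exp ((x^2 - a^2)/2) := by
        rw [Real.one_le_exp_iff]; linarith
      rw [max_eq_right (by linarith), mul_zero]
  rw [hfun, integral_indicator measurableSet_Ioo, ← integral_Ioc_eq_integral_Ioo,
    ← intervalIntegral.integral_of_le (by linarith : -a ≤ a)]
  rw [intervalIntegral.integral_sub integrable_gexp.intervalIntegrable
    (intervalIntegrable_const), gexp_interval_even, intervalIntegral.integral_const]
  rw [Jfun_eq]
  simp only [smul_eq_mul]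
  ring

lemma qL_nonneg {σ : ℝ} (hσ : 0 < σ) (μ x : ℝ) : 0 ≤ qL μ σ x := by
  unfold qL; positivity

lemma qL_integrable {σ : ℝ} (hσ : 0 < σ) (μ : ℝ) : Integrable (qL μ σ) := by
  have hb : (0:ℝ) < 1/(2*σ^2) := by positivity
  have h1 := ((integrable_sq_exp hb).comp_sub_right μ).const_mul
    ((Real.sqrt (2*π) * σ^3)⁻¹)
  apply h1.congr
  filter_upwards with x
  unfold qL
  have harg : -(1/(2*σ^2)) * (x - μ)^2 = -(x-μ)^2/(2*σ^2) := by field_simp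
  rw [harg]
  field_simp

lemma qL_comp {σ : ℝ} (hσ : 0 < σ) (μ r : ℝ) :
    qL μ σ (σ * r + μ) = (Real.sqrt (2*π))⁻¹ * σ⁻¹ * (r^2 * Real.exp (-r^2/2)) := by
  unfold qL
  have h1 : σ * r + μ - μ = σ * r := by ring
  rw [h1]
  have h2 : -(σ*r)^2/(2*σ^2) = -r^2/2 := by field_simp
  rw [h2]
  have hs : Real.sqrt (2*π) > 0 := Real.sqrt_pos.mpr (by positivity)
  field_simp

lemma qL_interval {σ : ℝ} (hσ : 0 < σ) (μ u v : ℝ) :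
    ∫ x in u..v, qL μ σ x
      = (Real.sqrt (2*π))⁻¹ * (Jfun ((v-μ)/σ) - Jfun ((u-μ)/σ)) := by
  have hne : σ ≠ 0 := hσ.ne'
  have h := intervalIntegral.smul_integral_comp_mul_add (a := (u-μ)/σ) (b := (v-μ)/σ)
    (f := qL μ σ) σ μ
  have hu : σ * ((u-μ)/σ) + μ = u := by field_simp; ring
  have hv : σ * ((v-μ)/σ) + μ = v := by field_simp; ring
  rw [hu, hv] at h
  rw [← h]
  simp only [qL_comp hσ]
  rw [intervalIntegral.integral_const_mul]
  have hadd := intervalIntegral.integral_add_adjacent_intervals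
    (a := (0:ℝ)) (b := (u-μ)/σ) (c := (v-μ)/σ)
    (f := fun r => r^2 * Real.exp (-r^2/2))
    (integrable_sq_gexp.intervalIntegrable) (integrable_sq_gexp.intervalIntegrable)
  have hJ : (∫ r in ((u-μ)/σ)..((v-μ)/σ), r^2 * Real.exp (-r^2/2))
      = Jfun ((v-μ)/σ) - Jfun ((u-μ)/σ) := by
    rw [Jfun, Jfun, ← hadd]; ring
  rw [hJ]
  have hs : Real.sqrt (2*π) > 0 := Real.sqrt_pos.mpr (by positivity)
  rw [smul_eq_mul]
  field_simp

lemma Jfun_zero : Jfun 0 = 0 := by simp [Jfun]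

lemma c0_sqrt : (Real.sqrt (2*π))⁻¹ * Real.sqrt (π/2) = 1/2 := by
  have hs : Real.sqrt (2*π) > 0 := Real.sqrt_pos.mpr (by positivity)
  rw [sqrt_pi_half_eq]
  field_simp

lemma qL_Iic_mu {σ : ℝ} (hσ : 0 < σ) (μ : ℝ) :
    ∫ x in Set.Iic μ, qL μ σ x = 1/2 := by
  have T1 := intervalIntegral_tendsto_integral_Iic (f := qL μ σ) (μ := volume)
    (a := fun s : ℝ => s) (l := Filter.atBot) μ
    (qL_integrable hσ μ).integrableOn Filter.tendsto_id
  have hcomp : Filter.Tendsto (fun s : ℝ => (μ - s)/σ) Filter.atBot Filter.atTop := by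
    apply Filter.Tendsto.atTop_div_const hσ
    exact Filter.tendsto_atTop_add_const_left _ μ Filter.tendsto_neg_atBot_atTop
  have T2 : Filter.Tendsto (fun s : ℝ => ∫ x in s..μ, qL μ σ x) Filter.atBot
      (nhds (1/2)) := by
    have heq : ∀ s : ℝ, (∫ x in s..μ, qL μ σ x)
        = (Real.sqrt (2*π))⁻¹ * Jfun ((μ - s)/σ) := by
      intro s
      rw [qL_interval hσ]
      have : (μ - μ)/σ = 0 := by simp
      rw [this, Jfun_zero]
      have : (s - μ)/σ = -((μ - s)/σ) := by ring
      rw [this, Jfun_neg]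
      ring
    simp only [heq]
    have := (Jfun_tendsto.comp hcomp).const_mul ((Real.sqrt (2*π))⁻¹)
    rw [c0_sqrt] at this
    exact this
  exact tendsto_nhds_unique T1 T2

lemma qL_Iic {σ : ℝ} (hσ : 0 < σ) (μ t : ℝ) :
    ∫ x in Set.Iic t, qL μ σ x
      = 1/2 + (Real.sqrt (2*π))⁻¹ * Jfun ((t-μ)/σ) := by
  have h := intervalIntegral.integral_Iic_sub_Iic
    ((qL_integrable hσ μ).integrableOn) ((qL_integrable hσ μ).integrableOn)
    (a := μ) (b := t)
  rw [qL_interval hσ, qL_Iic_mu hσ] at h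
  have : (μ - μ)/σ = 0 := by simp
  rw [this, Jfun_zero] at h
  linarith

lemma rhs_Iic {σ : ℝ} (hσ : 0 < σ) (μ t : ℝ) :
    (volume.withDensity fun x => ENNReal.ofReal (qL μ σ x)) (Set.Iic t)
      = ENNReal.ofReal (1/2 + (Real.sqrt (2*π))⁻¹ * Jfun ((t-μ)/σ)) := by
  rw [withDensity_apply _ measurableSet_Iic,
    ← ofReal_integral_eq_lintegral_ofReal ((qL_integrable hσ μ).integrableOn)
      (Filter.Eventually.of_forall fun x => qL_nonneg hσ μ x),
    qL_Iic hσ]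

lemma gauss_pdf_eq (x : ℝ) :
    gaussianPDFReal 0 1 x = (Real.sqrt (2*π))⁻¹ * Real.exp (-x^2/2) := by
  simp [gaussianPDFReal]

lemma gauss_total : ∫ x : ℝ, Real.exp (-x^2/2) = Real.sqrt (2*π) := by
  have := integral_gaussian (1/2)
  have h2 : ∀ x : ℝ, -(1/2 : ℝ) * x^2 = -x^2/2 := by intro x; ring
  simp_rw [h2] at this
  rw [this, show π / (1/2 : ℝ) = 2*π by ring]

lemma max_cont {a : ℝ} : Continuous (fun x : ℝ => max (1 - Real.exp ((x^2 - a^2)/2)) 0) := by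
  apply Continuous.max _ continuous_const
  continuity

lemma max_mem {a x : ℝ} : 0 ≤ max (1 - Real.exp ((x^2 - a^2)/2)) 0 ∧
    max (1 - Real.exp ((x^2 - a^2)/2)) 0 ≤ 1 := by
  constructor
  · exact le_max_right _ _
  · apply max_le _ zero_le_one
    nlinarith [Real.exp_pos ((x^2-a^2)/2)]

lemma real_int_plus (a : ℝ) :
    Integrable (fun x : ℝ => Real.exp (-x^2/2) * max (1 - Real.exp ((x^2 - a^2)/2)) 0) := by
  apply integrable_gexp.mono'
    (((by continuity : Continuous (fun x : ℝ => Real.exp (-x^2/2))).mul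
      max_cont).aestronglyMeasurable)
  filter_upwards with x
  simp only [Pi.mul_apply]
  rw [Real.norm_eq_abs, abs_of_nonneg (mul_nonneg (Real.exp_pos _).le max_mem.1)]
  nlinarith [Real.exp_pos (-x^2/2), (max_mem (a := a) (x := x)).2, (max_mem (a := a) (x := x)).1]

lemma min_eq_one_sub_max {a x : ℝ} :
    min (Real.exp ((x^2 - a^2)/2)) 1 = 1 - max (1 - Real.exp ((x^2 - a^2)/2)) 0 := by
  rcases le_total (Real.exp ((x^2 - a^2)/2)) 1 with h | h
  · rw [min_eq_left h, max_eq_left (by linarith)]; ring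
  · rw [min_eq_right h, max_eq_right (by linarith)]; ring

lemma real_int_min (a : ℝ) :
    Integrable (fun x : ℝ => Real.exp (-x^2/2) * min (Real.exp ((x^2 - a^2)/2)) 1) := by
  have h := integrable_gexp.sub (real_int_plus a)
  apply h.congr
  filter_upwards with x
  simp only [Pi.sub_apply]
  rw [min_eq_one_sub_max]; ring

lemma real_integral_min {a : ℝ} (ha : 0 ≤ a) :
    ∫ x : ℝ, Real.exp (-x^2/2) * min (Real.exp ((x^2 - a^2)/2)) 1
      = Real.sqrt (2*π) - 2 * Jfun a := by
  have h : ∀ x : ℝ, Real.exp (-x^2/2) * min (Real.exp ((x^2 - a^2)/2)) 1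
      = Real.exp (-x^2/2) - Real.exp (-x^2/2) * max (1 - Real.exp ((x^2 - a^2)/2)) 0 := by
    intro x; rw [min_eq_one_sub_max]; ring
  simp_rw [h]
  rw [integral_sub integrable_gexp (real_int_plus a), gauss_total, key_identity ha]

lemma ofReal_eq_max (r : ℝ) : ENNReal.ofReal r = ENNReal.ofReal (max r 0) := by
  rcases le_total r 0 with h | h
  · rw [ENNReal.ofReal_of_nonpos h, max_eq_right h, ENNReal.ofReal_zero]
  · rw [max_eq_left h]

lemma gauss_lintegral (F : ℝ → ℝ) (hF : Measurable F) (hFnn : ∀ x, 0 ≤ F x)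
    (hFi : Integrable (fun x => Real.exp (-x^2/2) * F x)) :
    ∫⁻ x, ENNReal.ofReal (F x) ∂(gaussianReal 0 1)
      = ENNReal.ofReal ((Real.sqrt (2*π))⁻¹ * ∫ x, Real.exp (-x^2/2) * F x) := by
  rw [gaussianReal_of_var_ne_zero 0 one_ne_zero,
    lintegral_withDensity_eq_lintegral_mul _ (measurable_gaussianPDF 0 1)
      (hF.ennreal_ofReal)]
  have hpt : ∀ x, (gaussianPDF 0 1 * fun x => ENNReal.ofReal (F x)) x
      = ENNReal.ofReal ((Real.sqrt (2*π))⁻¹ * (Real.exp (-x^2/2) * F x)) := by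
    intro x
    simp only [Pi.mul_apply, gaussianPDF, gauss_pdf_eq]
    rw [← ENNReal.ofReal_mul (by positivity), mul_assoc]
  simp_rw [hpt]
  rw [← ofReal_integral_eq_lintegral_ofReal (hFi.const_mul _)
    (Filter.Eventually.of_forall fun x => by
      have := hFnn x; positivity)]
  rw [integral_const_mul]

lemma gauss_lint_plus {a : ℝ} (ha : 0 ≤ a) :
    ∫⁻ x, ENNReal.ofReal (1 - Real.exp ((x^2 - a^2)/2)) ∂(gaussianReal 0 1)
      = ENNReal.ofReal (2 * ((Real.sqrt (2*π))⁻¹ * Jfun a)) := by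
  have h1 : ∀ x : ℝ, ENNReal.ofReal (1 - Real.exp ((x^2 - a^2)/2))
      = ENNReal.ofReal (max (1 - Real.exp ((x^2 - a^2)/2)) 0) := fun x => ofReal_eq_max _
  simp_rw [h1]
  rw [gauss_lintegral (fun x => max (1 - Real.exp ((x^2 - a^2)/2)) 0) (by fun_prop)
      (fun x => le_max_right _ _) (real_int_plus a)]
  rw [key_identity ha]
  ring_nf

lemma gauss_lint_min {a : ℝ} (ha : 0 ≤ a) :
    ∫⁻ x, ENNReal.ofReal (min (Real.exp ((x^2 - a^2)/2)) 1) ∂(gaussianReal 0 1)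
      = ENNReal.ofReal (1 - 2 * ((Real.sqrt (2*π))⁻¹ * Jfun a)) := by
  rw [gauss_lintegral (fun x => min (Real.exp ((x^2 - a^2)/2)) 1) (by fun_prop)
      (fun x => le_min (Real.exp_pos _).le zero_le_one) (real_int_min a)]
  rw [real_integral_min ha]
  have hs : (0:ℝ) < Real.sqrt (2*π) := Real.sqrt_pos.mpr (by positivity)
  congr 1
  field_simp

lemma sqrt_pos_of_Ioo {h x : ℝ} (h0 : 0 < h) (h1 : h < 1) :
    0 < -2 * Real.log h + x^2 := by
  have := Real.log_neg h0 h1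
  nlinarith [sq_nonneg x]

lemma sec_plus {σ μ t x : ℝ} (hσ : 0 < σ) (hat : μ ≤ t) :
    (volume.restrict (Set.Ioo (0:ℝ) 1))
      {h : ℝ | μ + σ * Real.sqrt (-2 * Real.log h + x^2) ≤ t}
      = ENNReal.ofReal (1 - Real.exp ((x^2 - ((t-μ)/σ)^2)/2)) := by
  set a := (t-μ)/σ with hadef
  have ha : 0 ≤ a := by apply div_nonneg (by linarith) hσ.le
  have hsa : σ * a = t - μ := by rw [hadef]; field_simp
  rw [Measure.restrict_apply' measurableSet_Ioo]
  have hset : {h : ℝ | μ + σ * Real.sqrt (-2 * Real.log h + x^2) ≤ t} ∩ Set.Ioo 0 1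
      = Set.Ico (Real.exp ((x^2 - a^2)/2)) 1 := by
    ext h
    simp only [Set.mem_inter_iff, Set.mem_setOf_eq, Set.mem_Ioo, Set.mem_Ico]
    constructor
    · rintro ⟨hcond, h0, h1⟩
      refine ⟨?_, h1⟩
      have hy : 0 < -2 * Real.log h + x^2 := sqrt_pos_of_Ioo h0 h1
      have hsq : Real.sqrt (-2 * Real.log h + x^2) ≤ a := by
        nlinarith
      have hyle : -2 * Real.log h + x^2 ≤ a^2 := by
        nlinarith [Real.sq_sqrt hy.le, Real.sqrt_nonneg (-2 * Real.log h + x^2)]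
      have hlog : (x^2 - a^2)/2 ≤ Real.log h := by linarith
      calc Real.exp ((x^2 - a^2)/2) ≤ Real.exp (Real.log h) := Real.exp_le_exp.mpr hlog
      _ = h := Real.exp_log h0
    · rintro ⟨hc, h1⟩
      have h0 : 0 < h := lt_of_lt_of_le (Real.exp_pos _) hc
      have hlog : (x^2 - a^2)/2 ≤ Real.log h := by
        have := Real.log_le_log (Real.exp_pos _) hc
        rwa [Real.log_exp] at this
      have hyle : -2 * Real.log h + x^2 ≤ a^2 := by linarith
      have hsq : Real.sqrt (-2 * Real.log h + x^2) ≤ a := by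
        calc Real.sqrt (-2 * Real.log h + x^2) ≤ Real.sqrt (a^2) := Real.sqrt_le_sqrt hyle
        _ = a := Real.sqrt_sq ha
      refine ⟨?_, h0, h1⟩
      nlinarith
  rw [hset, Real.volume_Ico]

lemma sec_minus_all {σ μ t x : ℝ} (hσ : 0 < σ) (hat : μ ≤ t) :
    (volume.restrict (Set.Ioo (0:ℝ) 1))
      {h : ℝ | μ + -(σ * Real.sqrt (-2 * Real.log h + x^2)) ≤ t} = 1 := by
  rw [Measure.restrict_apply' measurableSet_Ioo]
  have hset : {h : ℝ | μ + -(σ * Real.sqrt (-2 * Real.log h + x^2)) ≤ t} ∩ Set.Ioo 0 1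
      = Set.Ioo 0 1 := by
    apply Set.inter_eq_right.mpr
    intro h _
    simp only [Set.mem_setOf_eq]
    nlinarith [Real.sqrt_nonneg (-2 * Real.log h + x^2)]
  rw [hset, Real.volume_Ioo]
  simp

lemma sec_plus_empty {σ μ t x : ℝ} (hσ : 0 < σ) (hat : t < μ) :
    (volume.restrict (Set.Ioo (0:ℝ) 1))
      {h : ℝ | μ + σ * Real.sqrt (-2 * Real.log h + x^2) ≤ t} = 0 := by
  rw [Measure.restrict_apply' measurableSet_Ioo]
  have hset : {h : ℝ | μ + σ * Real.sqrt (-2 * Real.log h + x^2) ≤ t} ∩ Set.Ioo 0 1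
      = ∅ := by
    ext h
    simp only [Set.mem_inter_iff, Set.mem_setOf_eq, Set.mem_Ioo, Set.mem_empty_iff_false,
      iff_false]
    rintro ⟨hcond, h0, h1⟩
    nlinarith [Real.sqrt_nonneg (-2 * Real.log h + x^2)]
  rw [hset]
  simp

lemma sec_minus_lt {σ μ t x : ℝ} (hσ : 0 < σ) (hat : t < μ) :
    (volume.restrict (Set.Ioo (0:ℝ) 1))
      {h : ℝ | μ + -(σ * Real.sqrt (-2 * Real.log h + x^2)) ≤ t}
      = ENNReal.ofReal (min (Real.exp ((x^2 - ((t-μ)/σ)^2)/2)) 1) := by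
  set a := (t-μ)/σ with hadef
  have hna : 0 < -a := by
    rw [hadef, show -((t-μ)/σ) = (μ-t)/σ by ring]
    exact div_pos (by linarith) hσ
  have hsa : σ * (-a) = μ - t := by rw [hadef]; field_simp; ring
  set c := Real.exp ((x^2 - a^2)/2) with hcdef
  have hc0 : 0 < c := Real.exp_pos _
  rw [Measure.restrict_apply' measurableSet_Ioo]
  have hset : {h : ℝ | μ + -(σ * Real.sqrt (-2 * Real.log h + x^2)) ≤ t} ∩ Set.Ioo 0 1
      = Set.Ioo 0 1 ∩ Set.Iic c := by
    ext h
    simp only [Set.mem_inter_iff, Set.mem_setOf_eq, Set.mem_Ioo, Set.mem_Iic]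
    constructor
    · rintro ⟨hcond, h0, h1⟩
      refine ⟨⟨h0, h1⟩, ?_⟩
      have hy : 0 < -2 * Real.log h + x^2 := sqrt_pos_of_Ioo h0 h1
      have hsq : -a ≤ Real.sqrt (-2 * Real.log h + x^2) := by nlinarith
      have hyge : a^2 ≤ -2 * Real.log h + x^2 := by
        nlinarith [Real.sq_sqrt hy.le]
      have hlog : Real.log h ≤ (x^2 - a^2)/2 := by linarith
      calc h = Real.exp (Real.log h) := (Real.exp_log h0).symm
      _ ≤ c := Real.exp_le_exp.mpr hlog
    · rintro ⟨⟨h0, h1⟩, hc⟩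
      refine ⟨?_, h0, h1⟩
      have hlog : Real.log h ≤ (x^2 - a^2)/2 := by
        have := Real.log_le_log h0 hc
        rwa [Real.log_exp] at this
      have hyge : a^2 ≤ -2 * Real.log h + x^2 := by linarith
      have hsq : -a ≤ Real.sqrt (-2 * Real.log h + x^2) := by
        calc -a ≤ |a| := neg_le_abs a
        _ = Real.sqrt (a^2) := (Real.sqrt_sq_eq_abs a).symm
        _ ≤ _ := Real.sqrt_le_sqrt hyge
      nlinarith
  rw [hset]
  rcases lt_or_ge c 1 with hc1 | hc1
  · have : Set.Ioo (0:ℝ) 1 ∩ Set.Iic c = Set.Ioc 0 c := by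
      ext h
      simp only [Set.mem_inter_iff, Set.mem_Ioo, Set.mem_Iic, Set.mem_Ioc]
      constructor
      · rintro ⟨⟨h0, _⟩, hc⟩; exact ⟨h0, hc⟩
      · rintro ⟨h0, hc⟩; exact ⟨⟨h0, lt_of_le_of_lt hc hc1⟩, hc⟩
    rw [this, Real.volume_Ioc, min_eq_left hc1.le]
    simp
  · have : Set.Ioo (0:ℝ) 1 ∩ Set.Iic c = Set.Ioo 0 1 := by
      apply Set.inter_eq_left.mpr
      intro h hh
      exact le_trans hh.2.le hc1
    rw [this, Real.volume_Ioo, min_eq_right hc1]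
    simp

lemma ennreal_half : ENNReal.ofReal (1/2 : ℝ) = 2⁻¹ := by
  rw [ENNReal.ofReal_div_of_pos (by norm_num), ENNReal.ofReal_one, one_div]
  norm_num

lemma case2_arith (y : ℝ) :
    (2:ENNReal)⁻¹ * ENNReal.ofReal (2 * y) = ENNReal.ofReal y := by
  rw [ENNReal.ofReal_mul (by norm_num : (0:ℝ) ≤ 2)]
  norm_num
  rw [← mul_assoc, ENNReal.inv_mul_cancel (by norm_num) (by norm_num), one_mul]

lemma case1_arith {z : ℝ} (hz : 0 ≤ z) :
    (2:ENNReal)⁻¹ * (ENNReal.ofReal (2 * z) + 1) = ENNReal.ofReal (1/2 + z) := by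
  rw [ENNReal.ofReal_add (by norm_num) hz, ennreal_half, mul_add, case2_arith]
  rw [add_comm, mul_one]

instance : IsProbabilityMeasure (volume.restrict (Set.Ioo (0:ℝ) 1)) :=
  ⟨by simp⟩

instance : IsProbabilityMeasure
    ((2:ENNReal)⁻¹ • (Measure.dirac (1:ℝ) + Measure.dirac (-1:ℝ))) := by
  constructor
  rw [Measure.smul_apply, Measure.add_apply, measure_univ, measure_univ, smul_eq_mul]
  rw [one_add_one_eq_two, ENNReal.inv_mul_cancel (by norm_num) (by norm_num)]

instance : IsProbabilityMeasure jointLaw := by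
  rw [jointLaw]; infer_instance

theorem L_distribution_sampling (σ : ℝ) (hσ : 0 < σ) (μ : ℝ) :
    Measure.map
        (fun p : ℝ × ℝ × ℝ =>
          μ + p.2.2 * σ * Real.sqrt (-2 * Real.log p.2.1 + p.1^2))
        jointLaw
      = volume.withDensity (fun x => ENNReal.ofReal (qL μ σ x)) := by
  set U : Measure ℝ := volume.restrict (Set.Ioo (0:ℝ) 1) with hUdef
  set S : Measure ℝ := (2:ENNReal)⁻¹ • (Measure.dirac (1:ℝ) + Measure.dirac (-1:ℝ))
    with hSdef
  have hmsqrt : Measurable Real.sqrt := Real.continuous_sqrt.measurable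
  have hf : Measurable (fun p : ℝ × ℝ × ℝ =>
      μ + p.2.2 * σ * Real.sqrt (-2 * Real.log p.2.1 + p.1^2)) := by
    apply Measurable.const_add
    exact ((measurable_snd.comp measurable_snd).mul_const σ).mul
      (hmsqrt.comp (((Real.measurable_log.comp
        (measurable_fst.comp measurable_snd)).const_mul (-2)).add
        (measurable_fst.pow_const 2)))
  haveI : IsProbabilityMeasure (Measure.map
      (fun p : ℝ × ℝ × ℝ => μ + p.2.2 * σ * Real.sqrt (-2 * Real.log p.2.1 + p.1^2))
      jointLaw) := Measure.isProbabilityMeasure_map hf.aemeasurable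
  refine Measure.ext_of_Iic _ _ (fun t => ?_)
  rw [rhs_Iic hσ μ t, Measure.map_apply hf measurableSet_Iic, jointLaw,
    Measure.prod_apply (hf measurableSet_Iic)]
  have hm2 : ∀ x : ℝ, Measurable (fun h : ℝ =>
      μ + σ * Real.sqrt (-2 * Real.log h + x^2)) := by
    intro x
    apply Measurable.const_add
    exact (hmsqrt.comp ((Real.measurable_log.const_mul (-2)).add
      measurable_const)).const_mul σ
  have hm3 : ∀ x : ℝ, Measurable (fun h : ℝ =>
      μ + -(σ * Real.sqrt (-2 * Real.log h + x^2))) := by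
    intro x
    apply Measurable.const_add
    exact ((hmsqrt.comp ((Real.measurable_log.const_mul (-2)).add
      measurable_const)).const_mul σ).neg
  have hprod : ∀ x : ℝ,
      (U.prod S) (Prod.mk x ⁻¹' ((fun p : ℝ × ℝ × ℝ =>
        μ + p.2.2 * σ * Real.sqrt (-2 * Real.log p.2.1 + p.1^2)) ⁻¹' Set.Iic t))
      = 2⁻¹ * (U {h : ℝ | μ + σ * Real.sqrt (-2 * Real.log h + x^2) ≤ t}
          + U {h : ℝ | μ + -(σ * Real.sqrt (-2 * Real.log h + x^2)) ≤ t}) := by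
    intro x
    have hA1 : MeasurableSet {h : ℝ | μ + σ * Real.sqrt (-2 * Real.log h + x^2) ≤ t} :=
      (hm2 x) measurableSet_Iic
    have hA2 : MeasurableSet {h : ℝ | μ + -(σ * Real.sqrt (-2 * Real.log h + x^2)) ≤ t} :=
      (hm3 x) measurableSet_Iic
    rw [Measure.prod_apply ((hf measurableSet_Iic).preimage measurable_prodMk_left)]
    have hpt : ∀ h : ℝ, S (Prod.mk h ⁻¹' (Prod.mk x ⁻¹' ((fun p : ℝ × ℝ × ℝ =>
        μ + p.2.2 * σ * Real.sqrt (-2 * Real.log p.2.1 + p.1^2)) ⁻¹' Set.Iic t)))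
        = 2⁻¹ * ({h : ℝ | μ + σ * Real.sqrt (-2 * Real.log h + x^2) ≤ t}.indicator 1 h
            + {h : ℝ | μ + -(σ * Real.sqrt (-2 * Real.log h + x^2)) ≤ t}.indicator 1 h) := by
      intro h
      have hpre : (Prod.mk h ⁻¹' (Prod.mk x ⁻¹' ((fun p : ℝ × ℝ × ℝ =>
          μ + p.2.2 * σ * Real.sqrt (-2 * Real.log p.2.1 + p.1^2)) ⁻¹' Set.Iic t)))
          = {s : ℝ | μ + s * σ * Real.sqrt (-2 * Real.log h + x^2) ≤ t} := rfl
      rw [hpre, hSdef, Measure.smul_apply, Measure.add_apply,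
        Measure.dirac_apply, Measure.dirac_apply, smul_eq_mul]
      simp only [Set.indicator_apply, Set.mem_setOf_eq, one_mul, neg_one_mul, neg_mul,
        Pi.one_apply]
    rw [lintegral_congr hpt,
      lintegral_const_mul' _ _ (ENNReal.inv_ne_top.mpr (by norm_num)),
      lintegral_add_left (measurable_one.indicator hA1),
      lintegral_indicator_one hA1, lintegral_indicator_one hA2]
  rw [lintegral_congr hprod]
  rcases le_or_gt μ t with hle | hlt
  · have ha : 0 ≤ (t-μ)/σ := div_nonneg (by linarith) hσ.le
    have hsp : ∀ x : ℝ, U {h : ℝ | μ + σ * Real.sqrt (-2 * Real.log h + x^2) ≤ t}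
        = ENNReal.ofReal (1 - Real.exp ((x^2 - ((t-μ)/σ)^2)/2)) :=
      fun x => sec_plus hσ hle
    have hsm : ∀ x : ℝ, U {h : ℝ | μ + -(σ * Real.sqrt (-2 * Real.log h + x^2)) ≤ t}
        = 1 := fun x => sec_minus_all hσ hle
    simp_rw [hsp, hsm]
    rw [lintegral_const_mul' _ _ (ENNReal.inv_ne_top.mpr (by norm_num)),
      lintegral_add_right _ measurable_const,
      gauss_lint_plus ha, lintegral_const, measure_univ, mul_one,
      case1_arith (mul_nonneg (by positivity) (Jfun_nonneg ha))]
  · have hsp : ∀ x : ℝ, U {h : ℝ | μ + σ * Real.sqrt (-2 * Real.log h + x^2) ≤ t}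
        = 0 := fun x => sec_plus_empty hσ hlt
    have hsm : ∀ x : ℝ, U {h : ℝ | μ + -(σ * Real.sqrt (-2 * Real.log h + x^2)) ≤ t}
        = ENNReal.ofReal (min (Real.exp ((x^2 - ((t-μ)/σ)^2)/2)) 1) :=
      fun x => sec_minus_lt hσ hlt
    simp_rw [hsp, hsm, zero_add]
    rw [lintegral_const_mul' _ _ (ENNReal.inv_ne_top.mpr (by norm_num))]
    have hna : 0 ≤ -((t-μ)/σ) := by
      rw [show -((t-μ)/σ) = (μ-t)/σ by ring]
      exact (div_pos (by linarith) hσ).le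
    have hsq : ∀ x : ℝ, ((t-μ)/σ)^2 = (-((t-μ)/σ))^2 := fun x => by ring
    simp_rw [show ∀ x : ℝ, (x^2 - ((t-μ)/σ)^2)/2 = (x^2 - (-((t-μ)/σ))^2)/2 from
      fun x => by ring]
    rw [gauss_lint_min hna, Jfun_neg]
    rw [show 1 - 2*((Real.sqrt (2*π))⁻¹ * -Jfun ((t-μ)/σ))
        = 2 * (1/2 + (Real.sqrt (2*π))⁻¹ * Jfun ((t-μ)/σ)) by ring]
    rw [case2_arith]
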